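/- Let G be a finite solvable group with |G| ≥ 4 and suppose that for every finite solvable group H with trivial Frattini subgroup we have k(H) ≥ |H|^β for a constant 0 < β ≤ 1. Then k(G) ≥ (β/2)·log₂|G|/log₂ log₂|G|. -/

import Mathlib

open Subgroup
open scoped commutatorElement

lemma auxConjLe {G H : Type*} [Group G] [Group H] [Finite G] {f : G →* H}
    (hf : Function.Surjective f) :
    Nat.card (ConjClasses H) ≤ Nat.card (ConjClasses G) :=
  Nat.card_le_card_of_surjective _ (ConjClasses.map_surjective hf)

lemma auxStep (W : Type*) [Group W] [Finite W] (N P : Subgroup W) (hN : N.Normal)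
    (hc : ∀ x ∈ N, ∀ p ∈ P, Commute x p) :
    Nat.card N ≤ Nat.card (ConjClasses W) * Nat.card (W ⧸ P) := by
  classical
  rw [← Nat.card_prod]
  have key : ∀ x : N, ∃ g : W, g * (ConjClasses.mk (x : W)).out * g⁻¹ = (x : W) := by
    intro x
    have h1 : ConjClasses.mk (ConjClasses.mk (x : W)).out = ConjClasses.mk (x : W) := by
      rw [← ConjClasses.quotient_mk_eq_mk]
      exact Quotient.out_eq _
    exact isConj_iff.mp (ConjClasses.mk_eq_mk_iff_isConj.mp h1)
  choose g hg using key
  apply Nat.card_le_card_of_injective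
    (fun x : N => ((ConjClasses.mk (x : W), (QuotientGroup.mk (g x) : W ⧸ P))))
  intro x y hxy
  obtain ⟨h1, h2⟩ := Prod.ext_iff.mp hxy
  simp only at h1 h2
  have hgy := hg y
  rw [← h1] at hgy
  set r := (ConjClasses.mk (x : W)).out with hr
  have hp : (g x)⁻¹ * g y ∈ P := (QuotientGroup.eq).mp h2
  have hrN : r ∈ N := by
    have : r = (g x)⁻¹ * (x : W) * (g x) := by
      rw [← hg x]; group; exact hr
    rw [this]
    have := hN.conj_mem _ x.2 (g x)⁻¹
    simpa [mul_assoc] using this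
  have hcomm : (g x)⁻¹ * g y * r * ((g x)⁻¹ * g y)⁻¹ = r := by
    have hcm := hc r hrN _ hp
    rw [← hcm]
    group
  have : (y : W) = (x : W) := by
    rw [← hgy, ← hg x]
    have hgyx : g y = g x * ((g x)⁻¹ * g y) := by group
    rw [hgyx]
    calc g x * ((g x)⁻¹ * g y) * r * (g x * ((g x)⁻¹ * g y))⁻¹
        = g x * ((g x)⁻¹ * g y * r * ((g x)⁻¹ * g y)⁻¹) * (g x)⁻¹ := by group
      _ = g x * r * (g x)⁻¹ := by rw [hcomm]
  exact Subtype.ext this.symm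

lemma auxFrattiniQuot (G : Type*) [Group G] :
    frattini (G ⧸ frattini G) = ⊥ := by
  have hsurj := QuotientGroup.mk'_surjective (frattini G)
  have hker : (QuotientGroup.mk' (frattini G)).ker = frattini G := QuotientGroup.ker_mk' _
  have hle : (frattini (G ⧸ frattini G)).comap (QuotientGroup.mk' (frattini G)) ≤ frattini G := by
    show _ ≤ Order.radical (Subgroup G)
    rw [Order.radical, le_iInf_iff]
    intro M
    rw [le_iInf_iff]
    intro hM
    have hΦM : frattini G ≤ M := frattini_le_coatom hM
    have hcoatom : IsCoatom (M.map (QuotientGroup.mk' (frattini G))) := by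
      constructor
      · intro htop
        apply hM.1
        have := congrArg (comap (QuotientGroup.mk' (frattini G))) htop
        rwa [comap_map_eq_self (hker.le.trans hΦM), comap_top] at this
      · intro H hH
        have h1 : M ≤ H.comap (QuotientGroup.mk' (frattini G)) := by
          rw [← comap_map_eq_self (f := QuotientGroup.mk' (frattini G)) (hker.le.trans hΦM)]
          exact comap_mono hH.le
        have h2 : M ≠ H.comap (QuotientGroup.mk' (frattini G)) := by
          intro heq
          apply hH.ne
          rw [heq, map_comap_eq_self_of_surjective hsurj]
        have h3 : H.comap (QuotientGroup.mk' (frattini G)) = ⊤ := hM.2 _ (lt_of_le_of_ne h1 h2)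
        have h4 := congrArg (map (QuotientGroup.mk' (frattini G))) h3
        rwa [map_comap_eq_self_of_surjective hsurj, map_top_of_surjective _ hsurj] at h4
    calc (frattini (G ⧸ frattini G)).comap (QuotientGroup.mk' (frattini G))
        ≤ (M.map (QuotientGroup.mk' (frattini G))).comap (QuotientGroup.mk' (frattini G)) :=
          comap_mono (frattini_le_coatom hcoatom)
      _ = M := comap_map_eq_self (hker.le.trans hΦM)
  have : frattini (G ⧸ frattini G) =
      ((frattini (G ⧸ frattini G)).comap (QuotientGroup.mk' (frattini G))).map
        (QuotientGroup.mk' (frattini G)) :=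
    (map_comap_eq_self_of_surjective hsurj _).symm
  rw [this]
  rw [Subgroup.map_eq_bot_iff, hker]
  exact hle

lemma auxCardMap {G : Type*} [Group G] [Finite G] (K H : Subgroup G) [K.Normal] (hKH : K ≤ H) :
    Nat.card H = Nat.card (H.map (QuotientGroup.mk' K)) * Nat.card K := by
  set f := (QuotientGroup.mk' K).comp H.subtype with hf
  have hrange : f.range = H.map (QuotientGroup.mk' K) := by
    rw [hf, MonoidHom.range_comp, H.range_subtype]
  have hker : f.ker = K.subgroupOf H := by
    rw [hf, ← MonoidHom.comap_ker, QuotientGroup.ker_mk']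
    rfl
  have h1 : Nat.card H = Nat.card (↥H ⧸ f.ker) * Nat.card f.ker :=
    Subgroup.card_eq_card_quotient_mul_card_subgroup f.ker
  rw [h1]
  congr 1
  · rw [← hrange]
    exact Nat.card_congr (QuotientGroup.quotientKerEquivRange f).toEquiv
  · rw [hker]
    exact Nat.card_congr (Subgroup.subgroupOfEquivOfLe hKH).toEquiv

/-- If every finite solvable group with trivial Frattini subgroup `H` satisfies
`k(H) ≥ |H|^β` (for a constant `0 < β ≤ 1`), then every finite solvable group `G`
with `|G| ≥ 4` satisfies `k(G) ≥ (β/2)·log₂|G|/log₂log₂|G|`. -/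
theorem stmt13 (β : ℝ) (hβ0 : 0 < β) (hβ1 : β ≤ 1)
    (hB : ∀ (H : Type) [Group H] [Finite H], IsSolvable H → frattini H = ⊥ →
      (Nat.card (ConjClasses H) : ℝ) ≥ (Nat.card H : ℝ) ^ β)
    (G : Type) [Group G] [Finite G] [Group.IsSolvable G] (hG : 4 ≤ Nat.card G) :
    (Nat.card (ConjClasses G) : ℝ) ≥
      (β / 2) * Real.logb 2 (Nat.card G) / Real.logb 2 (Real.logb 2 (Nat.card G)) := by
  classical
  set Φ := frattini G with hΦdef
  set n := Nat.card G with hn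
  set k := Nat.card (ConjClasses G) with hk
  set hh := Nat.card (G ⧸ Φ) with hhdef
  -- Theorem B applied to the Frattini quotient
  have hBQ := hB (G ⧸ Φ) (inferInstance : Group.IsSolvable (G ⧸ Φ)) (auxFrattiniQuot G)
  have hkQ : Nat.card (ConjClasses (G ⧸ Φ)) ≤ k := auxConjLe (QuotientGroup.mk'_surjective Φ)
  have h1 : ((hh : ℝ)) ^ β ≤ (k : ℝ) := le_trans hBQ (by exact_mod_cast hkQ)
  -- The lower central series of the Frattini subgroup, as subgroups of G
  let A : ℕ → Subgroup G := fun j => (Subgroup.lowerCentralSeries (⊤ : Subgroup ↥Φ) j).map Φ.subtype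
  have hA0 : A 0 = Φ := by
    show (⊤ : Subgroup ↥Φ).map Φ.subtype = Φ
    rw [← MonoidHom.range_eq_map, Φ.range_subtype]
  have hAsucc : ∀ j, A (j + 1) = ⁅A j, Φ⁆ := by
    intro j
    show (⁅Subgroup.lowerCentralSeries (⊤ : Subgroup ↥Φ) j, (⊤ : Subgroup ↥Φ)⁆).map Φ.subtype = _
    rw [Subgroup.map_commutator, ← MonoidHom.range_eq_map, Φ.range_subtype]
  have hAnorm : ∀ j, (A j).Normal := by
    intro j
    induction j with
    | zero => rw [hA0]; infer_instance
    | succ j ih => rw [hAsucc j]; exact @Subgroup.commutator_normal G _ (A j) Φ ih inferInstance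
  have hAanti : Antitone A := fun a b hab => Subgroup.map_mono (Subgroup.lowerCentralSeries_antitone ⊤ hab)
  have hex : ∃ j, A j = ⊥ := by
    obtain ⟨m0, hm0⟩ := Subgroup.nilpotent_iff_lowerCentralSeries.mp (frattini_nilpotent (G := G))
    refine ⟨m0, ?_⟩
    show (Subgroup.lowerCentralSeries (⊤ : Subgroup ↥Φ) m0).map Φ.subtype = ⊥
    rw [hm0, Subgroup.map_bot]
  obtain ⟨m, hAm, hmin⟩ : ∃ m, A m = ⊥ ∧ ∀ j, j < m → A j ≠ ⊥ :=
    ⟨Nat.find hex, Nat.find_spec hex, fun j hj => Nat.find_min hex hj⟩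
  have hstrict : ∀ j, j < m → A (j + 1) < A j := by
    intro j hj
    refine lt_of_le_of_ne (hAanti (Nat.le_succ j)) ?_
    intro heq
    have hl : Subgroup.lowerCentralSeries (⊤ : Subgroup ↥Φ) (j + 1) = Subgroup.lowerCentralSeries (⊤ : Subgroup ↥Φ) j :=
      Subgroup.map_injective Φ.subtype_injective heq
    have hprop : ∀ i, Subgroup.lowerCentralSeries (⊤ : Subgroup ↥Φ) (j + i) = Subgroup.lowerCentralSeries (⊤ : Subgroup ↥Φ) j := by
      intro i
      induction i with
      | zero => rfl
      | succ i ih =>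
        have h2 : Subgroup.lowerCentralSeries (⊤ : Subgroup ↥Φ) (j + i + 1) = ⁅Subgroup.lowerCentralSeries (⊤ : Subgroup ↥Φ) (j + i), ⊤⁆ := rfl
        have h3 : Subgroup.lowerCentralSeries (⊤ : Subgroup ↥Φ) (j + 1) = ⁅Subgroup.lowerCentralSeries (⊤ : Subgroup ↥Φ) j, ⊤⁆ := rfl
        rw [show j + (i + 1) = (j + i) + 1 by omega, h2, ih, ← h3, hl]
    apply hmin j hj
    have h4 : Subgroup.lowerCentralSeries (⊤ : Subgroup ↥Φ) m = Subgroup.lowerCentralSeries (⊤ : Subgroup ↥Φ) j := by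
      have := hprop (m - j)
      rwa [show j + (m - j) = m from by omega] at this
    show (Subgroup.lowerCentralSeries (⊤ : Subgroup ↥Φ) j).map Φ.subtype = ⊥
    rw [← h4]
    exact hAm
  -- the chain gives m + 1 conjugacy classes
  have hchain : m + 1 ≤ k := by
    have hxex : ∀ i : Fin (m + 1), ∃ y : G,
        y ∈ A (m - (i : ℕ)) ∧ (1 ≤ (i : ℕ) → y ∉ A (m - (i : ℕ) + 1)) := by
      intro i
      rcases Nat.eq_zero_or_pos (i : ℕ) with h0 | h0
      · exact ⟨1, Subgroup.one_mem _, by omega⟩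
      · have hi := i.isLt
        obtain ⟨y, hy1, hy2⟩ := SetLike.exists_of_lt (hstrict (m - (i : ℕ)) (by omega))
        exact ⟨y, hy1, fun _ => hy2⟩
    choose xs hxs1 hxs2 using hxex
    have key : ∀ i j : Fin (m + 1), (i : ℕ) < (j : ℕ) →
        ConjClasses.mk (xs i) = ConjClasses.mk (xs j) → False := by
      intro i j hij heq
      obtain ⟨c, hc⟩ := isConj_iff.mp (ConjClasses.mk_eq_mk_iff_isConj.mp heq)
      have hin : xs j ∈ A (m - (i : ℕ)) := by
        rw [← hc]
        exact (hAnorm _).conj_mem _ (hxs1 i) c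
      have hi := i.isLt
      have hj := j.isLt
      have hle2 : A (m - (i : ℕ)) ≤ A (m - (j : ℕ) + 1) := hAanti (by omega)
      exact hxs2 j (by omega) (hle2 hin)
    have hinj : Function.Injective (fun i : Fin (m + 1) => ConjClasses.mk (xs i)) := by
      intro i j heq
      rcases Nat.lt_trichotomy (i : ℕ) (j : ℕ) with h | h | h
      · exact absurd heq (fun heq => key i j h heq)
      · exact Fin.ext h
      · exact absurd heq.symm (fun heq => key j i h heq)
    have hcard := Nat.card_le_card_of_injective _ hinj
    simpa [Nat.card_eq_fintype_card] using hcard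
  -- the layer inequality
  have hlayer : ∀ j, Nat.card (A j) ≤ k * hh * Nat.card (A (j + 1)) := by
    intro j
    set K := A (j + 1) with hK
    haveI hKnorm : K.Normal := hAnorm (j + 1)
    have hπsurj : Function.Surjective (QuotientGroup.mk' K) := QuotientGroup.mk'_surjective K
    set Nb := (A j).map (QuotientGroup.mk' K) with hNb
    set Pb := Φ.map (QuotientGroup.mk' K) with hPb
    have hNbnorm : Nb.Normal := (hAnorm j).map _ hπsurj
    have hcomm : ∀ x ∈ Nb, ∀ p ∈ Pb, Commute x p := by
      rintro x ⟨a, ha, rfl⟩ p ⟨b, hb, rfl⟩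
      rw [← commutatorElement_eq_one_iff_commute, ← map_commutatorElement]
      have hmem : ⁅a, b⁆ ∈ (QuotientGroup.mk' K).ker := by
        rw [QuotientGroup.ker_mk']
        rw [hK, hAsucc j]
        exact Subgroup.commutator_mem_commutator ha hb
      exact hmem
    have hstep := auxStep (G ⧸ K) Nb Pb hNbnorm hcomm
    have hkq : Nat.card (ConjClasses (G ⧸ K)) ≤ k := auxConjLe hπsurj
    have hKle : K ≤ A j := hAanti (Nat.le_succ j)
    have hKleΦ : K ≤ Φ := by rw [← hA0]; exact hAanti (Nat.zero_le _)
    have cardAj : Nat.card (A j) = Nat.card Nb * Nat.card K := auxCardMap K (A j) hKle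
    have cardΦ : Nat.card Φ = Nat.card Pb * Nat.card K := auxCardMap K Φ hKleΦ
    have cardG1 : Nat.card G = Nat.card (G ⧸ K) * Nat.card K :=
      Subgroup.card_eq_card_quotient_mul_card_subgroup K
    have cardG2 : Nat.card G = hh * Nat.card Φ :=
      Subgroup.card_eq_card_quotient_mul_card_subgroup Φ
    have cardGq : Nat.card (G ⧸ K) = Nat.card ((G ⧸ K) ⧸ Pb) * Nat.card Pb :=
      Subgroup.card_eq_card_quotient_mul_card_subgroup Pb
    have hKpos : 0 < Nat.card K := Nat.card_pos
    have hPbpos : 0 < Nat.card Pb := Nat.card_pos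
    have e1 : (Nat.card ((G ⧸ K) ⧸ Pb) * Nat.card Pb) * Nat.card K
        = (hh * Nat.card Pb) * Nat.card K := by
      rw [← cardGq, ← cardG1, cardG2, cardΦ]
      ring
    have e2 := Nat.eq_of_mul_eq_mul_right hKpos e1
    have hquot : Nat.card ((G ⧸ K) ⧸ Pb) = hh := Nat.eq_of_mul_eq_mul_right hPbpos e2
    have hNbk : Nat.card Nb ≤ k * hh :=
      hstep.trans (Nat.mul_le_mul hkq (le_of_eq hquot))
    calc Nat.card (A j) = Nat.card Nb * Nat.card K := cardAj
      _ ≤ k * hh * Nat.card K := Nat.mul_le_mul_right _ hNbk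
  -- induction
  have hind : ∀ j, Nat.card Φ ≤ (k * hh) ^ j * Nat.card (A j) := by
    intro j
    induction j with
    | zero => rw [hA0]; simpa using le_refl (Nat.card Φ)
    | succ j ih =>
      calc Nat.card Φ ≤ (k * hh) ^ j * Nat.card (A j) := ih
        _ ≤ (k * hh) ^ j * (k * hh * Nat.card (A (j + 1))) :=
            Nat.mul_le_mul_left _ (hlayer j)
        _ = (k * hh) ^ (j + 1) * Nat.card (A (j + 1)) := by ring
  have hΦbound : Nat.card Φ ≤ (k * hh) ^ m := by
    have h5 := hind m
    rwa [hAm, Subgroup.card_bot, mul_one] at h5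
  have hnbound : n ≤ hh * (k * hh) ^ m := by
    calc n = hh * Nat.card Φ := Subgroup.card_eq_card_quotient_mul_card_subgroup Φ
      _ ≤ hh * (k * hh) ^ m := Nat.mul_le_mul_left _ hΦbound
  -- now real arithmetic
  have kpos : 0 < k := Nat.card_pos
  have hhpos : 0 < hh := Nat.card_pos
  have hk1 : (1 : ℝ) ≤ (k : ℝ) := by exact_mod_cast kpos
  have hh1 : (1 : ℝ) ≤ (hh : ℝ) := by exact_mod_cast hhpos
  have hn4 : (4 : ℝ) ≤ (n : ℝ) := by exact_mod_cast hG
  set L := Real.logb 2 (n : ℝ) with hL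
  set LL := Real.logb 2 L with hLL
  have h24 : Real.logb 2 4 = 2 := by
    rw [show (4 : ℝ) = 2 ^ (2 : ℕ) by norm_num, Real.logb_pow,
      Real.logb_self_eq_one (by norm_num)]
    norm_num
  have hL2 : 2 ≤ L := by
    rw [← h24]
    exact Real.logb_le_logb_of_le (by norm_num) (by norm_num) hn4
  have hLL1 : 1 ≤ LL := by
    rw [hLL, ← Real.logb_self_eq_one (b := 2) (by norm_num)]
    exact Real.logb_le_logb_of_le (by norm_num) (by norm_num) (by linarith)
  have hLLpos : (0 : ℝ) < LL := by linarith
  rcases le_or_gt L (k : ℝ) with hcase | hcase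
  · rw [ge_iff_le, div_le_iff₀ hLLpos]
    nlinarith [hL2, hLL1, hβ1, hβ0.le, hcase]
  · have hlogk0 : 0 ≤ Real.logb 2 (k : ℝ) := Real.logb_nonneg (by norm_num) hk1
    have hlogkLL : Real.logb 2 (k : ℝ) ≤ LL := by
      rw [hLL]
      exact Real.logb_le_logb_of_le (by norm_num) (by linarith) hcase.le
    have hhle : (hh : ℝ) ≤ (k : ℝ) ^ (1 / β) := by
      have h0 : ((hh : ℝ) ^ β) ^ (1 / β) ≤ (k : ℝ) ^ (1 / β) :=
        Real.rpow_le_rpow (by positivity) h1 (by positivity)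
      rwa [← Real.rpow_mul (by positivity), mul_one_div, div_self hβ0.ne',
        Real.rpow_one] at h0
    have hcast : (n : ℝ) ≤ (hh : ℝ) * ((k : ℝ) * (hh : ℝ)) ^ m := by exact_mod_cast hnbound
    have hnk : (n : ℝ) ≤ (k : ℝ) ^ ((m : ℝ) + ((m : ℝ) + 1) / β) := by
      calc (n : ℝ) ≤ (hh : ℝ) * ((k : ℝ) * (hh : ℝ)) ^ m := hcast
        _ = (k : ℝ) ^ m * (hh : ℝ) ^ (m + 1) := by ring
        _ ≤ (k : ℝ) ^ m * ((k : ℝ) ^ (1 / β)) ^ (m + 1) := by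
            apply mul_le_mul_of_nonneg_left (pow_le_pow_left₀ (by positivity) hhle (m + 1))
              (by positivity)
        _ = (k : ℝ) ^ ((m : ℝ) + ((m : ℝ) + 1) / β) := by
            rw [← Real.rpow_natCast ((k : ℝ)) m,
              ← Real.rpow_natCast ((k : ℝ) ^ (1 / β)) (m + 1),
              ← Real.rpow_mul (by positivity), ← Real.rpow_add (by positivity)]
            congr 1
            push_cast
            ring
    have hLle : L ≤ ((m : ℝ) + ((m : ℝ) + 1) / β) * Real.logb 2 (k : ℝ) := by
      have hmono : L ≤ Real.logb 2 ((k : ℝ) ^ ((m : ℝ) + ((m : ℝ) + 1) / β)) := by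
        rw [hL]
        exact Real.logb_le_logb_of_le (by norm_num) (by linarith) hnk
      rwa [Real.logb_rpow_eq_mul_logb_of_pos (by positivity)] at hmono
    have hLle2 : β * L ≤ (β * (m : ℝ) + ((m : ℝ) + 1)) * Real.logb 2 (k : ℝ) := by
      have h6 := mul_le_mul_of_nonneg_left hLle hβ0.le
      have hid : β * ((m : ℝ) + ((m : ℝ) + 1) / β) = β * (m : ℝ) + ((m : ℝ) + 1) := by
        field_simp
      calc β * L ≤ β * (((m : ℝ) + ((m : ℝ) + 1) / β) * Real.logb 2 (k : ℝ)) := h6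
        _ = (β * ((m : ℝ) + ((m : ℝ) + 1) / β)) * Real.logb 2 (k : ℝ) := by ring
        _ = (β * (m : ℝ) + ((m : ℝ) + 1)) * Real.logb 2 (k : ℝ) := by rw [hid]
    have hm1k : ((m : ℝ) + 1) ≤ (k : ℝ) := by exact_mod_cast hchain
    have hmR : (0 : ℝ) ≤ (m : ℝ) := Nat.cast_nonneg m
    rw [ge_iff_le, div_le_iff₀ hLLpos]
    have c1 : β * (m : ℝ) + ((m : ℝ) + 1) ≤ 2 * ((m : ℝ) + 1) := by nlinarith
    have c2 : (β * (m : ℝ) + ((m : ℝ) + 1)) * Real.logb 2 (k : ℝ)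
        ≤ 2 * ((m : ℝ) + 1) * Real.logb 2 (k : ℝ) := mul_le_mul_of_nonneg_right c1 hlogk0
    have c3 : 2 * ((m : ℝ) + 1) * Real.logb 2 (k : ℝ) ≤ 2 * ((m : ℝ) + 1) * LL := by
      apply mul_le_mul_of_nonneg_left hlogkLL (by positivity)
    have c4 : 2 * ((m : ℝ) + 1) * LL ≤ 2 * (k : ℝ) * LL := by
      apply mul_le_mul_of_nonneg_right _ (le_trans zero_le_one hLL1)
      linarith only [hm1k]
    linarith only [hLle2, c2, c3, c4]
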